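/- Let ℓ be a prime number, and let R be a commutative ring that is ℓ-adically separated, i.e., ⋂_{i≥1} ℓ^i·R = (0). Let H be a profinite group such that every open normal subgroup of H has index coprime to ℓ (H has pro-order prime to ℓ). Let ρ : H → GL_n(R) be a group homomorphism such that for every i ≥ 1 the preimage under ρ of the subgroup K^i = ker(GL_n(R) → GL_n(R/ℓ^i R)) is open in H. Then the image ρ(H) is a finite group. -/

import Mathlib

open Matrix

private lemma entry_dvd_pow {R : Type*} [CommRing R] {n : ℕ} {x : R}
    {A : Matrix (Fin n) (Fin n) R} (hA : ∀ j k, x ∣ A j k) :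
    ∀ m : ℕ, ∀ j k, x ^ (m + 1) ∣ (A ^ (m + 1)) j k := by
  intro m
  induction m with
  | zero => simpa using hA
  | succ m ih =>
    intro j k
    rw [show A ^ (m + 1 + 1) = A ^ (m + 1) * A from pow_succ A (m + 1),
      Matrix.mul_apply, pow_succ]
    exact Finset.dvd_sum fun t _ => mul_dvd_mul (ih j t) (hA t k)

/-- Key algebraic step: if `g ≡ 1 mod ℓ^i` entrywise, then `g ^ ℓ ≡ 1 mod ℓ^(i+1)`. -/
private lemma step_dvd {R : Type*} [CommRing R] {n ℓ i : ℕ} (hℓ : ℓ.Prime) (hi : 1 ≤ i)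
    {g : GL (Fin n) R}
    (hg : ∀ j k, (ℓ : R) ^ i ∣ ((g : Matrix (Fin n) (Fin n) R) - 1) j k) :
    ∀ j k, (ℓ : R) ^ (i + 1) ∣
      (((g ^ ℓ : GL (Fin n) R) : Matrix (Fin n) (Fin n) R) - 1) j k := by
  intro j k
  set A := (g : Matrix (Fin n) (Fin n) R) - 1 with hAdef
  have hcoe : ((g ^ ℓ : GL (Fin n) R) : Matrix (Fin n) (Fin n) R) = (A + 1) ^ ℓ := by
    rw [Units.val_pow_eq_pow_val, hAdef, sub_add_cancel]
  rw [hcoe, (Commute.one_right A).add_pow ℓ, Finset.sum_range_succ']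
  simp only [pow_zero, Nat.choose_zero_right, Nat.cast_one, mul_one, one_mul, one_pow]
  rw [add_sub_cancel_right, Matrix.sum_apply]
  refine Finset.dvd_sum fun m hm => ?_
  rw [← Matrix.diagonal_natCast, Matrix.mul_diagonal]
  rcases Nat.eq_zero_or_pos m with hm0 | hm0
  · subst hm0
    simp only [zero_add, pow_one, Nat.choose_one_right]
    rw [pow_succ]
    exact mul_dvd_mul (hg j k) dvd_rfl
  · have h1 : (ℓ : R) ^ (i * (m + 1)) ∣ (A ^ (m + 1)) j k := by
      have := entry_dvd_pow (x := (ℓ : R) ^ i) (fun j k => hg j k) m j k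
      rwa [← pow_mul] at this
    have h2 : (ℓ : R) ^ (i + 1) ∣ (ℓ : R) ^ (i * (m + 1)) := by
      apply pow_dvd_pow
      have : i + i ≤ i * (m + 1) := by nlinarith
      omega
    exact Dvd.dvd.mul_right (h2.trans h1) _

private lemma mem_ker_iff {R : Type*} [CommRing R] {n : ℕ} (I : Ideal R) (g : GL (Fin n) R) :
    g ∈ MonoidHom.ker (Matrix.GeneralLinearGroup.map (n := Fin n) (Ideal.Quotient.mk I)) ↔
      ∀ j k, ((g : Matrix (Fin n) (Fin n) R) - 1) j k ∈ I := by
  rw [MonoidHom.mem_ker, Units.ext_iff, Units.val_one]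
  have hmap : ∀ j k : Fin n,
      ((Matrix.GeneralLinearGroup.map (n := Fin n) (Ideal.Quotient.mk I) g :
        GL (Fin n) (R ⧸ I)) : Matrix (Fin n) (Fin n) (R ⧸ I)) j k
      = Ideal.Quotient.mk I ((g : Matrix (Fin n) (Fin n) R) j k) := fun j k => rfl
  have hone : ∀ j k : Fin n, (1 : Matrix (Fin n) (Fin n) (R ⧸ I)) j k
      = Ideal.Quotient.mk I ((1 : Matrix (Fin n) (Fin n) R) j k) := by
    intro j k
    by_cases h : j = k <;> simp [Matrix.one_apply, h]
  constructor
  · intro h j k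
    rw [Matrix.sub_apply, ← Ideal.Quotient.eq, ← hmap j k, ← hone j k, h]
  · intro h
    funext j k
    rw [hmap j k, hone j k, Ideal.Quotient.eq]
    simpa [Matrix.sub_apply] using h j k


/-- Lemma 2.2 of the paper: let `R` be an `ℓ`-adically separated commutative ring
(`⋂_{i ≥ 1} ℓ^i R = 0`), let `H` be a profinite group of pro-order prime to `ℓ` (every
open normal subgroup has index coprime to `ℓ`), and let `ρ : H → GL_n(R)` be a
homomorphism such that the preimage of each congruence subgroup
`K^i = ker (GL_n(R) → GL_n(R/ℓ^i R))` is open in `H`. Then `ρ(H)` is finite. -/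
theorem image_finite_of_prime_to_ell_proorder
    (ℓ : ℕ) (hℓ : ℓ.Prime) {R : Type*} [CommRing R]
    (hsep : ∀ a : R, (∀ i : ℕ, 1 ≤ i → a ∈ Ideal.span {(ℓ : R) ^ i}) → a = 0)
    {H : Type*} [Group H] [TopologicalSpace H] [IsTopologicalGroup H]
    [CompactSpace H] [T2Space H] [TotallyDisconnectedSpace H]
    (horder : ∀ U : Subgroup H, U.Normal → IsOpen (U : Set H) → Nat.Coprime U.index ℓ)
    (n : ℕ) (ρ : H →* GL (Fin n) R)
    (hcont : ∀ i : ℕ, 1 ≤ i →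
      IsOpen (ρ ⁻¹' ((MonoidHom.ker
        (Matrix.GeneralLinearGroup.map (n := Fin n)
          (Ideal.Quotient.mk (Ideal.span {(ℓ : R) ^ i})))) : Set (GL (Fin n) R)))) :
    (Set.range ρ).Finite := by
  classical
  set Kk : ℕ → Subgroup (GL (Fin n) R) := fun i =>
    MonoidHom.ker (Matrix.GeneralLinearGroup.map (n := Fin n)
      (Ideal.Quotient.mk (Ideal.span {(ℓ : R) ^ i}))) with hKk
  have hker : ∀ (i : ℕ) (g : GL (Fin n) R), g ∈ Kk i ↔
      ∀ j k, (ℓ : R) ^ i ∣ ((g : Matrix (Fin n) (Fin n) R) - 1) j k := by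
    intro i g
    rw [hKk, mem_ker_iff]
    simp only [Ideal.mem_span_singleton]
  have hcomap_open : ∀ i : ℕ, 1 ≤ i → IsOpen ((Subgroup.comap ρ (Kk i)) : Set H) := by
    intro i hi
    rw [Subgroup.coe_comap]
    exact hcont i hi
  -- main claim: elements of ρ⁻¹(K¹) map into every Kⁱ
  have claim : ∀ i : ℕ, 1 ≤ i → ∀ h : H, ρ h ∈ Kk 1 → ρ h ∈ Kk i := by
    intro i
    induction i with
    | zero => omega
    | succ i ih =>
      intro _ h hh
      rcases Nat.eq_zero_or_pos i with h0 | hipos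
      · subst h0; exact hh
      -- open normal subgroup inside ρ⁻¹(K^{i+1})
      have hSopen : IsOpen ((Subgroup.comap ρ (Kk (i + 1))) : Set H) :=
        hcomap_open (i + 1) (by omega)
      have hSclopen : IsClopen ((Subgroup.comap ρ (Kk (i + 1))) : Set H) :=
        ⟨Subgroup.isClosed_of_isOpen _ hSopen, hSopen⟩
      obtain ⟨N, hN⟩ := IsTopologicalGroup.exist_openNormalSubgroup_sub_clopen_nhds_of_one
        hSclopen (Subgroup.comap ρ (Kk (i + 1))).one_mem
      have hNopen : IsOpen ((N.toSubgroup : Subgroup H) : Set H) := N.toOpenSubgroup.isOpen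
      have : Finite (H ⧸ N.toSubgroup) :=
        Subgroup.quotient_finite_of_isOpen _ hNopen
      set m := orderOf (QuotientGroup.mk h : H ⧸ N.toSubgroup) with hmdef
      have hmem : h ^ m ∈ N.toSubgroup := by
        rw [← QuotientGroup.eq_one_iff]
        rw [QuotientGroup.mk_pow]
        exact pow_orderOf_eq_one _
      have hmdvd : m ∣ N.toSubgroup.index := by
        rw [Subgroup.index_eq_card]
        exact orderOf_dvd_natCard _
      have hcop : Nat.Coprime ℓ m :=
        ((Nat.Coprime.coprime_dvd_left hmdvd (horder _ N.isNormal' hNopen))).symm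
      obtain ⟨u, v, huv⟩ : ∃ u v : ℤ, u * ℓ + v * m = 1 := by
        obtain ⟨u, v, huv⟩ := Nat.isCoprime_iff_coprime.mpr hcop
        exact ⟨u, v, huv⟩
      have hH : (h ^ u) ^ ℓ * (h ^ m) ^ v = h := by
        rw [← zpow_natCast (h ^ u) ℓ, ← _root_.zpow_mul, ← zpow_natCast h m, ← _root_.zpow_mul,
          ← _root_.zpow_add, mul_comm (m : ℤ) v, huv, zpow_one]
      have hfirst : ρ (h ^ u) ∈ Kk i := by
        refine ih hipos (h ^ u) ?_
        rw [map_zpow]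
        exact Subgroup.zpow_mem _ hh u
      have hfirstl : (ρ (h ^ u)) ^ ℓ ∈ Kk (i + 1) := by
        rw [hker]
        exact step_dvd hℓ hipos ((hker i _).mp hfirst)
      have hsecond : ρ (h ^ m) ∈ Kk (i + 1) := hN hmem
      have hρ : ρ h = (ρ (h ^ u)) ^ ℓ * (ρ (h ^ m)) ^ v := by
        rw [← map_pow, ← map_zpow, ← _root_.map_mul, hH]
      rw [hρ]
      exact mul_mem hfirstl (Subgroup.zpow_mem _ hsecond v)
  -- elements of ρ⁻¹(K¹) are in the kernel of ρ
  have hle : Subgroup.comap ρ (Kk 1) ≤ MonoidHom.ker ρ := by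
    intro h hh
    rw [Subgroup.mem_comap] at hh
    rw [MonoidHom.mem_ker]
    apply Units.ext
    rw [Units.val_one]
    have hz : ((ρ h : Matrix (Fin n) (Fin n) R) - 1) = 0 := by
      funext j k
      apply hsep
      intro i hi
      rw [Ideal.mem_span_singleton]
      exact (hker i _).mp (claim i hi h hh) j k
    rw [← sub_eq_zero]
    exact hz
  have hkopen : IsOpen ((MonoidHom.ker ρ : Subgroup H) : Set H) :=
    Subgroup.isOpen_mono hle (hcomap_open 1 le_rfl)
  have : Finite (H ⧸ MonoidHom.ker ρ) :=
    Subgroup.quotient_finite_of_isOpen _ hkopen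
  have hsub : Set.range ρ ⊆ Set.range (QuotientGroup.kerLift ρ) := by
    rintro x ⟨h, rfl⟩
    exact ⟨QuotientGroup.mk h, QuotientGroup.kerLift_mk ρ h⟩
  exact (Set.finite_range _).subset hsub
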